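/- Let F : B_ℂ(0,r) × B_E(0,r) → ℂ be complex analytic with F(0,y) = 0 for all y ∈ B_E(0,r), and define T(x,y) = (F(x,y), G(y) + x·h(x,y)). Let y : B_ℂ(0,δ) → E be the analytic curve with y(0) = 0 and y(x) = G(y(x)) + x·h(x, y(x)), and set q(x) = F(x, y(x)) − x. Then there exist δ' ∈ (0,δ] and ρ > 0 such that the fixed points of T in B_ℂ(0,δ') × B_E(0,ρ) are exactly the points (x, y(x)) with |x| < δ' and q(x) = 0. In particular, (0,0) is an isolated fixed point of T if and only if q does not vanish identically on any neighborhood of 0 in ℂ. -/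

import Mathlib

open Filter Topology

theorem stmt6 {E : Type*} [NormedAddCommGroup E] [NormedSpace ℂ E] [CompleteSpace E]
    (r : ℝ) (hr : 0 < r) (κ : ℝ) (hκ0 : 0 < κ) (hκ1 : κ < 1)
    (G : E → E) (hG : AnalyticOnNhd ℂ G (Metric.ball 0 r)) (hG0 : G 0 = 0)
    (hGlip : ∀ y ∈ Metric.ball (0 : E) r, ∀ y' ∈ Metric.ball (0 : E) r,
      ‖G y - G y'‖ ≤ κ * ‖y - y'‖)
    (h : ℂ × E → E)
    (hh : AnalyticOnNhd ℂ h (Metric.ball (0 : ℂ) r ×ˢ Metric.ball (0 : E) r))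
    (F : ℂ × E → ℂ)
    (hFa : AnalyticOnNhd ℂ F (Metric.ball (0 : ℂ) r ×ˢ Metric.ball (0 : E) r))
    (hF0 : ∀ yy ∈ Metric.ball (0 : E) r, F (0, yy) = 0)
    (T : ℂ × E → ℂ × E) (hT : ∀ p : ℂ × E, T p = (F p, G p.2 + p.1 • h p))
    -- the analytic curve `y` with `y 0 = 0` and `y x = G (y x) + x • h (x, y x)`
    (δ : ℝ) (hδ0 : 0 < δ) (hδr : δ ≤ r)
    (y : ℂ → E) (hya : AnalyticOnNhd ℂ y (Metric.ball 0 δ)) (hy0 : y 0 = 0)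
    (hycurve : ∀ x ∈ Metric.ball (0 : ℂ) δ,
      y x ∈ Metric.ball (0 : E) r ∧ y x = G (y x) + x • h (x, y x)) :
    ∃ δ' : ℝ, 0 < δ' ∧ δ' ≤ δ ∧ ∃ ρ : ℝ, 0 < ρ ∧
      -- the fixed points of `T` in `B_ℂ(0,δ') × B_E(0,ρ)` are exactly the points
      -- `(x, y x)` with `|x| < δ'` and `q x = 0`, where `q x = F (x, y x) - x`
      (∀ x ∈ Metric.ball (0 : ℂ) δ', ∀ yy ∈ Metric.ball (0 : E) ρ,
        (T (x, yy) = (x, yy) ↔ yy = y x ∧ F (x, y x) - x = 0)) ∧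
      -- in particular, `(0,0)` is an isolated fixed point of `T` iff `q` does not
      -- vanish identically on any neighborhood of `0` in `ℂ`
      ((∃ ε : ℝ, 0 < ε ∧ ∀ p ∈ Metric.ball ((0 : ℂ), (0 : E)) ε, T p = p → p = (0, 0)) ↔
        ¬ ∃ ε : ℝ, 0 < ε ∧ ∀ x ∈ Metric.ball (0 : ℂ) ε, F (x, y x) - x = 0) := by
  -- Lipschitz bound for `h` near the origin
  have hh00 : AnalyticAt ℂ h ((0 : ℂ), (0 : E)) :=
    hh (0, 0) ⟨Metric.mem_ball_self hr, Metric.mem_ball_self hr⟩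
  have hcd : ContDiffAt ℂ 1 h ((0 : ℂ), (0 : E)) := hh00.contDiffAt
  obtain ⟨K, t, ht, hlip⟩ := hcd.exists_lipschitzOnWith
  obtain ⟨ε₂, hε₂, hball⟩ := Metric.mem_nhds_iff.mp ht
  -- radius `ρ`
  set ρ : ℝ := min r ε₂ / 2 with hρdef
  have hρ : 0 < ρ := half_pos (lt_min hr hε₂)
  have hρr : ρ ≤ r := (half_le_self (lt_min hr hε₂).le).trans (min_le_left _ _)
  have hρε₂ : ρ ≤ ε₂ := (half_le_self (lt_min hr hε₂).le).trans (min_le_right _ _)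
  -- continuity of the curve at `0`
  have hyc : ContinuousAt y 0 := (hya 0 (Metric.mem_ball_self hδ0)).continuousAt
  obtain ⟨η, hη, hyη⟩ : ∃ η > 0, ∀ x : ℂ, dist x 0 < η → dist (y x) 0 < ρ := by
    rcases Metric.continuousAt_iff.mp hyc ρ hρ with ⟨η, hη, hyη⟩
    exact ⟨η, hη, fun x hx => by simpa [hy0] using hyη hx⟩
  -- radius `δ'`
  set c : ℝ := (1 - κ) / (2 * ((K : ℝ) + 1)) with hcdef
  have hK1 : (0 : ℝ) < (K : ℝ) + 1 := by positivity
  have hc : 0 < c := by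
    apply div_pos (by linarith) (by positivity)
  have hcK : c * ((K : ℝ) + 1) = (1 - κ) / 2 := by
    rw [hcdef, div_mul_eq_mul_div, div_eq_div_iff (by positivity) (by norm_num)]; ring
  set δ' : ℝ := min (min δ η) (min ε₂ c) with hδ'def
  have hδ' : 0 < δ' := lt_min (lt_min hδ0 hη) (lt_min hε₂ hc)
  have hδ'δ : δ' ≤ δ := (min_le_left _ _).trans (min_le_left _ _)
  have hδ'η : δ' ≤ η := (min_le_left _ _).trans (min_le_right _ _)
  have hδ'ε₂ : δ' ≤ ε₂ := (min_le_right _ _).trans (min_le_left _ _)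
  have hδ'c : δ' ≤ c := (min_le_right _ _).trans (min_le_right _ _)
  -- facts about the curve on the small ball
  have hcurve' : ∀ x : ℂ, ‖x‖ < δ' → y x ∈ Metric.ball (0 : E) r ∧
      y x = G (y x) + x • h (x, y x) ∧ ‖y x‖ < ρ := by
    intro x hx
    have hxδ : x ∈ Metric.ball (0 : ℂ) δ := by
      simp only [Metric.mem_ball, dist_zero_right]; linarith
    refine ⟨(hycurve x hxδ).1, (hycurve x hxδ).2, ?_⟩
    have := hyη x (by simpa [dist_zero_right] using lt_of_lt_of_le hx hδ'η)
    simpa [dist_zero_right] using this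
  -- the main uniqueness argument
  have key : ∀ x : ℂ, ‖x‖ < δ' → ∀ yy : E, ‖yy‖ < ρ →
      yy = G yy + x • h (x, yy) → yy = y x := by
    intro x hx yy hyy heq
    obtain ⟨hyxr, hyxeq, hyxρ⟩ := hcurve' x hx
    have hmem1 : (x, yy) ∈ t := by
      apply hball
      simp only [Metric.mem_ball, Prod.dist_eq, dist_zero_right, max_lt_iff]
      exact ⟨lt_of_lt_of_le hx hδ'ε₂, lt_of_lt_of_le hyy hρε₂⟩
    have hmem2 : (x, y x) ∈ t := by
      apply hball
      simp only [Metric.mem_ball, Prod.dist_eq, dist_zero_right, max_lt_iff]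
      exact ⟨lt_of_lt_of_le hx hδ'ε₂, lt_of_lt_of_le hyxρ hρε₂⟩
    have hlip' : ‖h (x, yy) - h (x, y x)‖ ≤ (K : ℝ) * ‖yy - y x‖ := by
      have := hlip.dist_le_mul (x, yy) hmem1 (x, y x) hmem2
      rw [Prod.dist_eq] at this
      simpa [dist_eq_norm] using this
    have hGb : ‖G yy - G (y x)‖ ≤ κ * ‖yy - y x‖ :=
      hGlip yy (Metric.mem_ball.mpr (by rw [dist_zero_right]; linarith)) (y x) hyxr
    have hdiff : yy - y x = (G yy - G (y x)) + x • (h (x, yy) - h (x, y x)) := by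
      calc yy - y x = (G yy + x • h (x, yy)) - (G (y x) + x • h (x, y x)) := by
            rw [← heq, ← hyxeq]
        _ = (G yy - G (y x)) + x • (h (x, yy) - h (x, y x)) := by rw [smul_sub]; abel
    set n : ℝ := ‖yy - y x‖ with hn
    have hn0 : 0 ≤ n := norm_nonneg _
    have hbound : n ≤ κ * n + ‖x‖ * ((K : ℝ) * n) := by
      calc n = ‖(G yy - G (y x)) + x • (h (x, yy) - h (x, y x))‖ := by rw [hn, hdiff]
        _ ≤ ‖G yy - G (y x)‖ + ‖x • (h (x, yy) - h (x, y x))‖ := norm_add_le _ _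
        _ = ‖G yy - G (y x)‖ + ‖x‖ * ‖h (x, yy) - h (x, y x)‖ := by rw [norm_smul]
        _ ≤ κ * n + ‖x‖ * ((K : ℝ) * n) := by gcongr
    have hxc : ‖x‖ ≤ c := le_trans hx.le hδ'c
    have hK0 : (0 : ℝ) ≤ (K : ℝ) := K.coe_nonneg
    have hcKle : c * (K : ℝ) ≤ (1 - κ) / 2 := by nlinarith
    have hn0' : n ≤ 0 := by
      nlinarith [mul_le_mul_of_nonneg_right hxc (mul_nonneg hK0 hn0),
        mul_le_mul_of_nonneg_right hcKle hn0, norm_nonneg x]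
    have : n = 0 := le_antisymm hn0' hn0
    exact sub_eq_zero.mp (norm_eq_zero.mp this)
  -- the main characterization of fixed points
  have hmain : ∀ x ∈ Metric.ball (0 : ℂ) δ', ∀ yy ∈ Metric.ball (0 : E) ρ,
      (T (x, yy) = (x, yy) ↔ yy = y x ∧ F (x, y x) - x = 0) := by
    intro x hx yy hyy
    rw [Metric.mem_ball, dist_zero_right] at hx hyy
    obtain ⟨hyxr, hyxeq, hyxρ⟩ := hcurve' x hx
    rw [hT]
    simp only [Prod.mk.injEq]
    constructor
    · rintro ⟨hF, hfix⟩
      have hyyx : yy = y x := key x hx yy hyy hfix.symm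
      rw [hyyx] at hF
      exact ⟨hyyx, by rw [hF]; ring⟩
    · rintro ⟨hyyx, hq⟩
      subst hyyx
      exact ⟨by linear_combination hq, hyxeq.symm⟩
  refine ⟨δ', hδ', hδ'δ, ρ, hρ, hmain, ?_⟩
  constructor
  · -- isolated fixed point → q not identically zero
    rintro ⟨ε₀, hε₀, hiso⟩ ⟨ε, hε, hq⟩
    obtain ⟨η₀, hη₀, hyη₀⟩ : ∃ η₀ > 0, ∀ x : ℂ, dist x 0 < η₀ → dist (y x) 0 < ε₀ := by
      rcases Metric.continuousAt_iff.mp hyc ε₀ hε₀ with ⟨η₀, hη₀, hyη₀⟩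
      exact ⟨η₀, hη₀, fun x hx => by simpa [hy0] using hyη₀ hx⟩
    set x₀ : ℝ := min (min ε δ) (min ε₀ η₀) / 2 with hx₀def
    have hx₀ : 0 < x₀ := half_pos (lt_min (lt_min hε hδ0) (lt_min hε₀ hη₀))
    have hx₀lt : x₀ < min (min ε δ) (min ε₀ η₀) := half_lt_self (lt_min (lt_min hε hδ0) (lt_min hε₀ hη₀))
    set x : ℂ := (x₀ : ℂ) with hxdef
    have hxn : ‖x‖ = x₀ := by
      simp [hxdef, Complex.norm_real, Real.norm_eq_abs, abs_of_pos hx₀]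
    have hxε : ‖x‖ < ε := by rw [hxn]; exact hx₀lt.trans_le ((min_le_left _ _).trans (min_le_left _ _))
    have hxδ : ‖x‖ < δ := by rw [hxn]; exact hx₀lt.trans_le ((min_le_left _ _).trans (min_le_right _ _))
    have hxε₀ : ‖x‖ < ε₀ := by rw [hxn]; exact hx₀lt.trans_le ((min_le_right _ _).trans (min_le_left _ _))
    have hxη₀ : ‖x‖ < η₀ := by rw [hxn]; exact hx₀lt.trans_le ((min_le_right _ _).trans (min_le_right _ _))
    have hxball : x ∈ Metric.ball (0 : ℂ) δ := by
      rw [Metric.mem_ball, dist_zero_right]; exact hxδ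
    obtain ⟨hyxr, hyxeq⟩ := hycurve x hxball
    have hqx : F (x, y x) - x = 0 := hq x (by rw [Metric.mem_ball, dist_zero_right]; exact hxε)
    have hyxε₀ : ‖y x‖ < ε₀ := by
      have := hyη₀ x (by rwa [dist_zero_right]); rwa [dist_zero_right] at this
    have hmem : (x, y x) ∈ Metric.ball ((0 : ℂ), (0 : E)) ε₀ := by
      simp only [Metric.mem_ball, Prod.dist_eq, dist_zero_right, max_lt_iff]
      exact ⟨hxε₀, hyxε₀⟩
    have hfix : T (x, y x) = (x, y x) := by
      rw [hT]
      simp only [Prod.mk.injEq]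
      exact ⟨by linear_combination hqx, hyxeq.symm⟩
    have := hiso (x, y x) hmem hfix
    have hx0 : x = 0 := congrArg Prod.fst this
    rw [hxdef] at hx0
    exact absurd (by exact_mod_cast hx0) (ne_of_gt hx₀)
  · -- q not identically zero → isolated fixed point
    intro hne
    set q : ℂ → ℂ := fun x => F (x, y x) - x with hqdef
    have hqa : AnalyticAt ℂ q 0 := by
      have h1 : AnalyticAt ℂ (fun x : ℂ => (x, y x)) 0 :=
        analyticAt_id.prod (hya 0 (Metric.mem_ball_self hδ0))
      have h2 : AnalyticAt ℂ F ((0 : ℂ), y 0) := by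
        rw [hy0]
        exact hFa (0, 0) ⟨Metric.mem_ball_self hr, Metric.mem_ball_self hr⟩
      exact (AnalyticAt.comp (g := F) (f := fun x : ℂ => (x, y x)) h2 h1).sub analyticAt_id
    rcases hqa.eventually_eq_zero_or_eventually_ne_zero with heq | hne'
    · exfalso
      apply hne
      rcases Metric.eventually_nhds_iff.mp heq with ⟨ε, hε, hq⟩
      exact ⟨ε, hε, fun x hx => hq (by rwa [Metric.mem_ball] at hx)⟩
    · have hne'' : ∀ᶠ x in 𝓝 (0 : ℂ), x ≠ 0 → q x ≠ 0 := by
        rw [eventually_nhdsWithin_iff] at hne'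
        filter_upwards [hne'] with x hx hx0
        exact hx (by simpa using hx0)
      rcases Metric.eventually_nhds_iff.mp hne'' with ⟨ε₁, hε₁, hq₁⟩
      refine ⟨min δ' (min ρ ε₁), lt_min hδ' (lt_min hρ hε₁), ?_⟩
      rintro ⟨px, py⟩ hp hfix
      simp only [Metric.mem_ball, Prod.dist_eq, max_lt_iff, lt_min_iff] at hp
      obtain ⟨⟨hp1δ', hp2δ'⟩, ⟨hp1ρ, hp2ρ⟩, hp1ε₁, hp2ε₁⟩ := hp
      rw [dist_zero_right] at hp1δ' hp1ε₁ hp2ρ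
      have := (hmain px (by rw [Metric.mem_ball, dist_zero_right]; exact hp1δ')
        py (by rw [Metric.mem_ball, dist_zero_right]; exact hp2ρ)).mp hfix
      obtain ⟨hpy, hqx⟩ := this
      have hpx0 : px = 0 := by
        by_contra hpx0
        exact hq₁ (by rwa [dist_zero_right]) hpx0 hqx
      subst hpx0
      rw [hpy, hy0]
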